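/- Let Z ~ N(0,1) and V₀ ~ Exp(1) be independent, c ∈ ℝ, α > 0, and let Z* ~ N(0,1) with Corr(Z, Z*) = ρ, independent of V₀. Define X = Z + (1/α)·V₀·1{Z* > c}. Then for every z ∈ ℝ, P(X < z) = Φ(z) - exp(α²/2 - αz)·Φ₂((αρ - c, z - α); -ρ), where Φ₂(·;r) is the bivariate standard normal cdf with correlation r. -/

import Mathlib

open MeasureTheory ProbabilityTheory

/-- The standard normal cumulative distribution function. -/
noncomputable def stdNormCDF (x : ℝ) : ℝ :=
  ((ProbabilityTheory.gaussianReal 0 1) (Set.Iic x)).toReal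

/-- Density of a bivariate standard normal vector with correlation `ρ`. -/
noncomputable def binormPDF (ρ : ℝ) (p : ℝ × ℝ) : ℝ :=
  (2 * Real.pi * Real.sqrt (1 - ρ ^ 2))⁻¹ *
    Real.exp (-(p.1 ^ 2 - 2 * ρ * p.1 * p.2 + p.2 ^ 2) / (2 * (1 - ρ ^ 2)))

/-- Bivariate standard normal cdf with correlation `ρ`: `Φ₂((a,b); ρ)`. -/
noncomputable def binormCDF (ρ a b : ℝ) : ℝ :=
  ∫ p : ℝ × ℝ in Set.Iio a ×ˢ Set.Iio b, binormPDF ρ p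

open Set Real
open scoped NNReal ENNReal

lemma gaussianReal_eq_map (m : ℝ) {v : ℝ≥0} (hv : v ≠ 0) :
    gaussianReal m v = Measure.map (fun x => Real.sqrt v * x + m) (gaussianReal 0 1) := by
  have h1 : (fun x => Real.sqrt v * x + m) = (· + m) ∘ (fun x => Real.sqrt v * x) := rfl
  rw [h1, ← Measure.map_map (measurable_id'.add_const m) (measurable_const_mul _)]
  have h2 : Measure.map (fun x => (Real.sqrt v : ℝ) * x) (gaussianReal 0 1)
      = gaussianReal 0 v := by
    have := gaussianReal_map_const_mul (μ := 0) (v := 1) (Real.sqrt v : ℝ)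
    simp only [mul_zero] at this
    convert this using 2
    ext
    simp [Real.sq_sqrt (v.coe_nonneg)]
  rw [h2, gaussianReal_map_add_const m, zero_add]

lemma gaussianReal_Iio_eq (m : ℝ) {v : ℝ≥0} (hv : v ≠ 0) (t : ℝ) :
    gaussianReal m v (Iio t) = gaussianReal 0 1 (Iio ((t - m) / Real.sqrt v)) := by
  have hs : (0:ℝ) < Real.sqrt v := Real.sqrt_pos.2 (by positivity)
  rw [gaussianReal_eq_map m hv, Measure.map_apply (by fun_prop) measurableSet_Iio]
  congr 1
  ext x
  simp only [mem_preimage, mem_Iio]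
  rw [lt_div_iff₀ hs]
  constructor <;> intro h <;> nlinarith

lemma gaussianReal_Ioi_eq (m : ℝ) {v : ℝ≥0} (hv : v ≠ 0) (t : ℝ) :
    gaussianReal m v (Ioi t) = gaussianReal 0 1 (Ioi ((t - m) / Real.sqrt v)) := by
  have hs : (0:ℝ) < Real.sqrt v := Real.sqrt_pos.2 (by positivity)
  rw [gaussianReal_eq_map m hv, Measure.map_apply (by fun_prop) measurableSet_Ioi]
  congr 1
  ext x
  simp only [mem_preimage, mem_Ioi]
  rw [div_lt_iff₀ hs]
  constructor <;> intro h <;> nlinarith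

lemma gaussianReal_map_neg :
    Measure.map (fun x : ℝ => -x) (gaussianReal 0 1) = gaussianReal 0 1 := by
  rw [show (fun x : ℝ => -x) = (fun x : ℝ => (-1 : ℝ) * x) by ext x; ring,
    gaussianReal_map_const_mul (μ := 0) (v := 1) (-1 : ℝ)]
  norm_num

lemma gaussianReal_Ioi_eq_Iio (t : ℝ) :
    gaussianReal 0 1 (Ioi t) = gaussianReal 0 1 (Iio (-t)) := by
  conv_lhs => rw [← _root_.gaussianReal_map_neg]
  rw [Measure.map_apply (by fun_prop) measurableSet_Ioi]
  congr 1
  ext x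
  simp only [mem_preimage, mem_Ioi, mem_Iio]
  constructor <;> intro h <;> linarith

lemma gaussianReal_singleton (t : ℝ) : gaussianReal 0 1 {t} = 0 :=
  gaussianReal_absolutelyContinuous 0 one_ne_zero (volume_singleton)

lemma stdNormCDF_eq_Iio (t : ℝ) : (gaussianReal 0 1 (Iio t)).toReal = stdNormCDF t := by
  rw [stdNormCDF, ← Set.Iic_diff_right, measure_diff_null (gaussianReal_singleton t)]

lemma integral_gaussianPDFReal_Iio (m : ℝ) {v : ℝ≥0} (hv : v ≠ 0) (t : ℝ) :
    ∫ y in Iio t, gaussianPDFReal m v y = stdNormCDF ((t - m) / Real.sqrt v) := by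
  have h := gaussianReal_apply_eq_integral m hv (Iio t)
  rw [gaussianReal_Iio_eq m hv t] at h
  have h2 : ((gaussianReal 0 1 (Iio ((t - m) / Real.sqrt v))).toReal)
      = ∫ y in Iio t, gaussianPDFReal m v y := by
    rw [h, ENNReal.toReal_ofReal (setIntegral_nonneg measurableSet_Iio
      (fun x _ => gaussianPDFReal_nonneg m v x))]
  rw [← h2, stdNormCDF_eq_Iio]

lemma integral_gaussianPDFReal_Ioi (m : ℝ) {v : ℝ≥0} (hv : v ≠ 0) (t : ℝ) :
    ∫ y in Ioi t, gaussianPDFReal m v y = stdNormCDF ((m - t) / Real.sqrt v) := by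
  have h := gaussianReal_apply_eq_integral m hv (Ioi t)
  rw [gaussianReal_Ioi_eq m hv t, gaussianReal_Ioi_eq_Iio] at h
  have h2 : ((gaussianReal 0 1 (Iio (-((t - m) / Real.sqrt v)))).toReal)
      = ∫ y in Ioi t, gaussianPDFReal m v y := by
    rw [h, ENNReal.toReal_ofReal (setIntegral_nonneg measurableSet_Ioi
      (fun x _ => gaussianPDFReal_nonneg m v x))]
  rw [← h2, stdNormCDF_eq_Iio]
  congr 1
  field_simp
  ring

lemma integral_stdpdf_Iio (t : ℝ) :
    ∫ y in Iio t, gaussianPDFReal 0 1 y = stdNormCDF t := by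
  rw [integral_gaussianPDFReal_Iio 0 one_ne_zero t]
  norm_num

section binorm
variable {r : ℝ} (hr : r ∈ Set.Ioo (-1 : ℝ) 1)
include hr

lemma one_sub_sq_pos : 0 < 1 - r ^ 2 := by
  obtain ⟨h1, h2⟩ := hr
  nlinarith [sq_nonneg r, sq_nonneg (1 - r), sq_nonneg (1 + r)]

lemma toNNReal_ne_zero : Real.toNNReal (1 - r ^ 2) ≠ 0 := by
  rw [Ne, Real.toNNReal_eq_zero, not_le]
  exact one_sub_sq_pos hr

lemma coe_toNNReal_one_sub_sq : ((Real.toNNReal (1 - r ^ 2) : ℝ≥0) : ℝ) = 1 - r ^ 2 :=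
  Real.coe_toNNReal _ (one_sub_sq_pos hr).le

lemma binormPDF_factor (x y : ℝ) :
    binormPDF r (x, y) =
      gaussianPDFReal 0 1 x * gaussianPDFReal (r * x) (Real.toNNReal (1 - r ^ 2)) y := by
  have h1 : (0:ℝ) < 1 - r ^ 2 := one_sub_sq_pos hr
  simp only [binormPDF, gaussianPDFReal, coe_toNNReal_one_sub_sq hr, NNReal.coe_one]
  rw [mul_mul_mul_comm]
  congr 1
  · rw [← mul_inv, ← Real.sqrt_mul (by positivity),
      show 2 * π * 1 * (2 * π * (1 - r ^ 2)) = (2 * π) ^ 2 * (1 - r ^ 2) by ring,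
      Real.sqrt_mul (sq_nonneg _), Real.sqrt_sq (by positivity)]
  · rw [← Real.exp_add]
    congr 1
    field_simp
    ring

lemma binormPDF_symm (x y : ℝ) : binormPDF r (x, y) = binormPDF r (y, x) := by
  simp only [binormPDF]
  congr 2
  ring

lemma binormPDF_nonneg (p : ℝ × ℝ) : 0 ≤ binormPDF r p := by
  have h1 : (0:ℝ) < 1 - r ^ 2 := one_sub_sq_pos hr
  have : (0:ℝ) < Real.sqrt (1 - r ^ 2) := Real.sqrt_pos.2 h1
  unfold binormPDF
  positivity

lemma binormPDF_continuous : Continuous (binormPDF r) := by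
  unfold binormPDF
  fun_prop

lemma binormPDF_integrable : Integrable (binormPDF r) (volume : Measure (ℝ × ℝ)) := by
  rw [Measure.volume_eq_prod ℝ ℝ]
  have hm : AEStronglyMeasurable (binormPDF r) (volume.prod volume) :=
    ((binormPDF_continuous hr).aestronglyMeasurable)
  rw [integrable_prod_iff hm]
  constructor
  · refine Filter.Eventually.of_forall (fun x => ?_)
    have : (fun y => binormPDF r (x, y))
        = fun y => gaussianPDFReal 0 1 x * gaussianPDFReal (r * x) (Real.toNNReal (1 - r ^ 2)) y := by
      ext y; exact binormPDF_factor hr x y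
    rw [this]
    exact (integrable_gaussianPDFReal _ _).const_mul _
  · have : (fun x => ∫ y, ‖binormPDF r (x, y)‖) = gaussianPDFReal 0 1 := by
      ext x
      have h1 : (fun y => ‖binormPDF r (x, y)‖)
          = fun y => gaussianPDFReal 0 1 x * gaussianPDFReal (r * x) (Real.toNNReal (1 - r ^ 2)) y := by
        ext y
        rw [Real.norm_eq_abs, abs_of_nonneg (binormPDF_nonneg hr _), binormPDF_factor hr x y]
      rw [h1, integral_const_mul, integral_gaussianPDFReal_eq_one _ (toNNReal_ne_zero hr), mul_one]
    rw [this]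
    exact integrable_gaussianPDFReal 0 1

end binorm

section binorm2
variable {r : ℝ} (hr : r ∈ Set.Ioo (-1 : ℝ) 1)
include hr

lemma binormCDF_repr (a b : ℝ) :
    binormCDF r a b =
      ∫ x in Iio a, gaussianPDFReal 0 1 x * stdNormCDF ((b - r * x) / Real.sqrt (1 - r ^ 2)) := by
  rw [binormCDF, Measure.volume_eq_prod ℝ ℝ,
    setIntegral_prod _ ((binormPDF_integrable hr).integrableOn)]
  refine setIntegral_congr_fun measurableSet_Iio (fun x _ => ?_)
  have h1 : (fun y => binormPDF r (x, y))
      = fun y => gaussianPDFReal 0 1 x * gaussianPDFReal (r * x) (Real.toNNReal (1 - r ^ 2)) y := by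
    ext y; exact binormPDF_factor hr x y
  rw [h1, integral_const_mul, integral_gaussianPDFReal_Iio _ (toNNReal_ne_zero hr)]
  rw [show ((Real.toNNReal (1 - r ^ 2) : ℝ≥0) : ℝ) = 1 - r ^ 2 from coe_toNNReal_one_sub_sq hr]

lemma binormCDF_swap (a b : ℝ) : binormCDF r a b = binormCDF r b a := by
  have h := (Measure.measurePreserving_swap (μ := (volume : Measure ℝ)) (ν := (volume : Measure ℝ))).setIntegral_preimage_emb
    MeasurableEquiv.prodComm.measurableEmbedding (binormPDF r) (Iio a ×ˢ Iio b)
  rw [binormCDF, binormCDF, Measure.volume_eq_prod ℝ ℝ, ← h]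
  have hset : (Prod.swap ⁻¹' (Iio a ×ˢ Iio b) : Set (ℝ × ℝ)) = Iio b ×ˢ Iio a := by
    ext p; simp [Set.mem_prod, and_comm]
  rw [hset]
  refine setIntegral_congr_fun (measurableSet_Iio.prod measurableSet_Iio) (fun p _ => ?_)
  have := binormPDF_symm hr p.2 p.1
  simpa [Prod.swap] using this

lemma binormPDF_integral_one : ∫ p : ℝ × ℝ, binormPDF r p = 1 := by
  rw [show (volume : Measure (ℝ × ℝ)) = (volume : Measure ℝ).prod volume from rfl,
    integral_prod _ (by rw [← Measure.volume_eq_prod ℝ ℝ]; exact binormPDF_integrable hr)]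
  have h : ∀ x : ℝ, (∫ y, binormPDF r (x, y)) = gaussianPDFReal 0 1 x := by
    intro x
    have h1 : (fun y => binormPDF r (x, y))
        = fun y => gaussianPDFReal 0 1 x * gaussianPDFReal (r * x) (Real.toNNReal (1 - r ^ 2)) y := by
      ext y; exact binormPDF_factor hr x y
    rw [h1, integral_const_mul, integral_gaussianPDFReal_eq_one _ (toNNReal_ne_zero hr), mul_one]
  simp_rw [h]
  exact integral_gaussianPDFReal_eq_one 0 one_ne_zero

end binorm2

noncomputable def binormMeasure (r : ℝ) : Measure (ℝ × ℝ) :=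
  volume.withDensity (fun p => ENNReal.ofReal (binormPDF r p))

section ident
variable {r : ℝ} (hr : r ∈ Set.Ioo (-1 : ℝ) 1)
include hr

lemma binormMeasure_apply {A : Set (ℝ × ℝ)} (hA : MeasurableSet A) :
    binormMeasure r A = ENNReal.ofReal (∫ p in A, binormPDF r p) := by
  rw [binormMeasure, withDensity_apply _ hA,
    ofReal_integral_eq_lintegral_ofReal ((binormPDF_integrable hr).integrableOn)
      (ae_of_all _ fun p => binormPDF_nonneg hr p)]

lemma binormMeasure_isProb : IsProbabilityMeasure (binormMeasure r) := by
  constructor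
  rw [binormMeasure_apply hr MeasurableSet.univ, setIntegral_univ, binormPDF_integral_one hr,
    ENNReal.ofReal_one]

lemma binormMeasure_rect (a b : ℝ) :
    binormMeasure r (Iio a ×ˢ Iio b) = ENNReal.ofReal (binormCDF r a b) := by
  rw [binormMeasure_apply hr (measurableSet_Iio.prod measurableSet_Iio)]
  rfl

end ident

lemma isCountablySpanning_range_Iio : IsCountablySpanning (range (Iio : ℝ → Set ℝ)) := by
  refine ⟨fun n => Iio n, fun n => ⟨n, rfl⟩, ?_⟩
  ext x
  simp only [mem_iUnion, mem_Iio, mem_univ, iff_true]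
  exact exists_nat_gt x

lemma generateFrom_rect :
    (inferInstance : MeasurableSpace (ℝ × ℝ)) =
      MeasurableSpace.generateFrom (Set.image2 (· ×ˢ ·) (range (Iio : ℝ → Set ℝ))
        (range (Iio : ℝ → Set ℝ))) := by
  rw [← generateFrom_prod_eq isCountablySpanning_range_Iio isCountablySpanning_range_Iio]
  have h : (inferInstance : MeasurableSpace ℝ) = MeasurableSpace.generateFrom (range Iio) := by
    rw [BorelSpace.measurable_eq (α := ℝ), borel_eq_generateFrom_Iio]
  conv_lhs => rw [show (inferInstance : MeasurableSpace (ℝ × ℝ))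
    = @Prod.instMeasurableSpace ℝ ℝ _ _ from rfl]
  congr 1 <;> exact h

lemma isPiSystem_rect : IsPiSystem (Set.image2 (· ×ˢ ·) (range (Iio : ℝ → Set ℝ))
    (range (Iio : ℝ → Set ℝ))) := by
  rintro _ ⟨_, ⟨a, rfl⟩, _, ⟨b, rfl⟩, rfl⟩ _ ⟨_, ⟨a', rfl⟩, _, ⟨b', rfl⟩, rfl⟩ _
  refine ⟨_, ⟨min a a', rfl⟩, _, ⟨min b b', rfl⟩, ?_⟩
  simp only [Set.prod_inter_prod, Set.Iio_inter_Iio]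

lemma setIntegral_comp_sub (g : ℝ → ℝ) (a t : ℝ) :
    ∫ x in Iio t, g (x - a) = ∫ u in Iio (t - a), g u := by
  have hemb : MeasurableEmbedding (fun u : ℝ => u + a) :=
    (Homeomorph.addRight a).measurableEmbedding
  have h := (measurePreserving_add_right (volume : Measure ℝ) a).setIntegral_preimage_emb
    hemb (fun x => g (x - a)) (Iio t)
  have hpre : (fun u : ℝ => u + a) ⁻¹' Iio t = Iio (t - a) := by
    ext u; simp only [mem_preimage, mem_Iio]; constructor <;> intro h' <;> linarith
  rw [hpre] at h
  rw [← h]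
  refine setIntegral_congr_fun measurableSet_Iio (fun u _ => ?_)
  simp

lemma exp_shift (α z x : ℝ) :
    Real.exp (-(α * (z - x))) * gaussianPDFReal 0 1 x
      = Real.exp (α ^ 2 / 2 - α * z) * gaussianPDFReal 0 1 (x - α) := by
  simp only [gaussianPDFReal, NNReal.coe_one]
  rw [mul_left_comm, mul_left_comm (Real.exp (α ^ 2 / 2 - α * z)), ← Real.exp_add, ← Real.exp_add]
  congr 2
  ring

lemma map_eq_binormMeasure {Ω : Type*} [MeasurableSpace Ω] (P : Measure Ω)
    [IsProbabilityMeasure P] {Z Zs : Ω → ℝ} (hZ : Measurable Z) (hZs : Measurable Zs)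
    {r : ℝ} (hr : r ∈ Set.Ioo (-1 : ℝ) 1)
    (hZZs : ∀ a b : ℝ, (P {ω | Z ω < a ∧ Zs ω < b}).toReal = binormCDF r a b) :
    Measure.map (fun ω => (Z ω, Zs ω)) P = binormMeasure r := by
  have hm : Measurable (fun ω => (Z ω, Zs ω)) := hZ.prodMk hZs
  haveI : IsProbabilityMeasure (Measure.map (fun ω => (Z ω, Zs ω)) P) :=
    Measure.isProbabilityMeasure_map hm.aemeasurable
  haveI : IsProbabilityMeasure (binormMeasure r) := binormMeasure_isProb hr
  refine ext_of_generate_finite _ generateFrom_rect isPiSystem_rect ?_ (by simp)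
  rintro _ ⟨_, ⟨a, rfl⟩, _, ⟨b, rfl⟩, rfl⟩
  have hset : (fun ω => (Z ω, Zs ω)) ⁻¹' (Iio a ×ˢ Iio b) = {ω | Z ω < a ∧ Zs ω < b} := by
    ext ω; simp [Set.mem_prod]
  rw [show (fun x1 x2 : Set ℝ => x1 ×ˢ x2) (Iio a) (Iio b) = Iio a ×ˢ Iio b from rfl,
    Measure.map_apply hm (measurableSet_Iio.prod measurableSet_Iio), hset,
    binormMeasure_rect hr, ← hZZs a b, ENNReal.ofReal_toReal (measure_ne_top P _)]

section main
variable {ρ α : ℝ} (hρ : ρ ∈ Set.Ioo (-1 : ℝ) 1) (hα : 0 < α)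
include hρ

lemma intH1 (z : ℝ) : ∫ p : ℝ × ℝ in Iio z ×ˢ (univ : Set ℝ), binormPDF ρ p = stdNormCDF z := by
  rw [Measure.volume_eq_prod ℝ ℝ, setIntegral_prod _ ((binormPDF_integrable hρ).integrableOn)]
  have h : ∀ x : ℝ, (∫ y in (univ : Set ℝ), binormPDF ρ (x, y)) = gaussianPDFReal 0 1 x := by
    intro x
    rw [Measure.restrict_univ]
    have h1 : (fun y => binormPDF ρ (x, y))
        = fun y => gaussianPDFReal 0 1 x * gaussianPDFReal (ρ * x) (Real.toNNReal (1 - ρ ^ 2)) y := by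
      ext y; exact binormPDF_factor hρ x y
    rw [h1, integral_const_mul, integral_gaussianPDFReal_eq_one _ (toNNReal_ne_zero hρ), mul_one]
  rw [show (∫ x in Iio z, ∫ y in (univ : Set ℝ), binormPDF ρ (x, y))
      = ∫ x in Iio z, gaussianPDFReal 0 1 x from
    setIntegral_congr_fun measurableSet_Iio (fun x _ => h x)]
  exact integral_stdpdf_Iio z

include hα

lemma psi_integrableOn (c z : ℝ) :
    IntegrableOn (fun p : ℝ × ℝ => Real.exp (-(α * (z - p.1))) * binormPDF ρ p)
      (Iio z ×ˢ Ioi c) := by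
  have hT : MeasurableSet (Iio z ×ˢ Ioi c : Set (ℝ × ℝ)) :=
    measurableSet_Iio.prod measurableSet_Ioi
  refine Integrable.mono ((binormPDF_integrable hρ).integrableOn)
    (Continuous.aestronglyMeasurable (by unfold binormPDF; fun_prop)) ?_
  refine (ae_restrict_mem hT).mono (fun p hp => ?_)
  have hx : p.1 < z := hp.1
  rw [Real.norm_eq_abs, Real.norm_eq_abs, abs_of_nonneg (binormPDF_nonneg hρ p), abs_mul,
    abs_of_nonneg (Real.exp_pos _).le, abs_of_nonneg (binormPDF_nonneg hρ p)]
  refine mul_le_of_le_one_left (binormPDF_nonneg hρ p) ?_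
  rw [Real.exp_le_one_iff]
  nlinarith

lemma intH2 (c z : ℝ) :
    ∫ p : ℝ × ℝ in Iio z ×ˢ Ioi c, Real.exp (-(α * (z - p.1))) * binormPDF ρ p
      = Real.exp (α ^ 2 / 2 - α * z) * binormCDF (-ρ) (α * ρ - c) (z - α) := by
  have hρ' : -ρ ∈ Set.Ioo (-1 : ℝ) 1 := by
    obtain ⟨h1, h2⟩ := hρ; constructor <;> linarith
  have hint := psi_integrableOn hρ hα c z
  rw [Measure.volume_eq_prod ℝ ℝ] at hint ⊢
  rw [setIntegral_prod _ hint]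
  have h : ∀ x : ℝ, (∫ y in Ioi c, Real.exp (-(α * (z - x))) * binormPDF ρ (x, y))
      = (Real.exp (-(α * (z - x))) * gaussianPDFReal 0 1 x)
          * stdNormCDF ((ρ * x - c) / Real.sqrt (1 - ρ ^ 2)) := by
    intro x
    have h1 : (fun y => Real.exp (-(α * (z - x))) * binormPDF ρ (x, y))
        = fun y => (Real.exp (-(α * (z - x))) * gaussianPDFReal 0 1 x)
            * gaussianPDFReal (ρ * x) (Real.toNNReal (1 - ρ ^ 2)) y := by
      ext y; rw [binormPDF_factor hρ x y]; ring
    rw [h1, integral_const_mul, integral_gaussianPDFReal_Ioi _ (toNNReal_ne_zero hρ),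
      coe_toNNReal_one_sub_sq hρ]
  rw [show (∫ x in Iio z, ∫ y in Ioi c, Real.exp (-(α * (z - x))) * binormPDF ρ (x, y))
      = ∫ x in Iio z, Real.exp (α ^ 2 / 2 - α * z) * (gaussianPDFReal 0 1 (x - α)
          * stdNormCDF ((ρ * x - c) / Real.sqrt (1 - ρ ^ 2))) from
    setIntegral_congr_fun measurableSet_Iio (fun x _ => by
      rw [h x, exp_shift α z x]; ring)]
  rw [integral_const_mul]
  congr 1
  have htr := setIntegral_comp_sub
    (fun u => gaussianPDFReal 0 1 u * stdNormCDF ((ρ * (u + α) - c) / Real.sqrt (1 - ρ ^ 2))) α z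
  rw [show (∫ x in Iio z, gaussianPDFReal 0 1 (x - α)
        * stdNormCDF ((ρ * x - c) / Real.sqrt (1 - ρ ^ 2)))
      = ∫ x in Iio z, (fun u => gaussianPDFReal 0 1 u
          * stdNormCDF ((ρ * (u + α) - c) / Real.sqrt (1 - ρ ^ 2))) (x - α) from
    setIntegral_congr_fun measurableSet_Iio (fun x _ => by
      simp only [sub_add_cancel])]
  rw [htr, binormCDF_swap hρ' (α * ρ - c) (z - α), binormCDF_repr hρ' (z - α) (α * ρ - c)]
  refine setIntegral_congr_fun measurableSet_Iio (fun u _ => ?_)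
  have harg : (α * ρ - c - -ρ * u) / Real.sqrt (1 - (-ρ) ^ 2)
      = (ρ * (u + α) - c) / Real.sqrt (1 - ρ ^ 2) := by
    rw [neg_sq]
    congr 1
    ring
  rw [harg]

end main

section comb
variable {ρ α : ℝ} (hρ : ρ ∈ Set.Ioo (-1 : ℝ) 1) (hα : 0 < α)
include hρ hα

lemma integral_G_mul (c z : ℝ) :
    ∫ p : ℝ × ℝ, ((if p.1 < z then (1:ℝ) else 0)
        * (if c < p.2 then 1 - Real.exp (-(α * (z - p.1))) else 1)) * binormPDF ρ p
      = stdNormCDF z - Real.exp (α ^ 2 / 2 - α * z) * binormCDF (-ρ) (α * ρ - c) (z - α) := by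
  have hT1 : MeasurableSet (Iio z ×ˢ (univ : Set ℝ) : Set (ℝ × ℝ)) :=
    measurableSet_Iio.prod MeasurableSet.univ
  have hT2 : MeasurableSet (Iio z ×ˢ Ioi c : Set (ℝ × ℝ)) :=
    measurableSet_Iio.prod measurableSet_Ioi
  have h1int : Integrable ((Iio z ×ˢ (univ : Set ℝ)).indicator (binormPDF ρ)) volume :=
    (binormPDF_integrable hρ).indicator hT1
  have h2int : Integrable ((Iio z ×ˢ Ioi c).indicator
      (fun p : ℝ × ℝ => Real.exp (-(α * (z - p.1))) * binormPDF ρ p)) volume :=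
    (psi_integrableOn hρ hα c z).integrable_indicator hT2
  have hsplit : ∀ p : ℝ × ℝ, ((if p.1 < z then (1:ℝ) else 0)
        * (if c < p.2 then 1 - Real.exp (-(α * (z - p.1))) else 1)) * binormPDF ρ p
      = (Iio z ×ˢ (univ : Set ℝ)).indicator (binormPDF ρ) p
        - (Iio z ×ˢ Ioi c).indicator
            (fun p : ℝ × ℝ => Real.exp (-(α * (z - p.1))) * binormPDF ρ p) p := by
    intro p
    by_cases hx : p.1 < z <;> by_cases hy : c < p.2 <;>
      simp only [Set.indicator_apply, Set.mem_prod, mem_Iio, mem_univ, mem_Ioi, hx, hy,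
        if_true, if_false, true_and, and_true, false_and, and_false] <;> ring
  rw [show (fun p : ℝ × ℝ => ((if p.1 < z then (1:ℝ) else 0)
        * (if c < p.2 then 1 - Real.exp (-(α * (z - p.1))) else 1)) * binormPDF ρ p)
      = fun p : ℝ × ℝ => (Iio z ×ˢ (univ : Set ℝ)).indicator (binormPDF ρ) p
        - (Iio z ×ˢ Ioi c).indicator
            (fun p : ℝ × ℝ => Real.exp (-(α * (z - p.1))) * binormPDF ρ p) p from
    funext hsplit]
  rw [integral_sub h1int h2int, integral_indicator hT1, integral_indicator hT2,
    intH1 hρ z, intH2 hρ hα c z]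

end comb

/-- Marginal cdf of `X = Z + (1/α) V₀ 1{Z* > c}`, where `(Z, Z*)` is bivariate standard
normal with correlation `ρ` and `V₀` is an independent unit exponential:
`P(X < z) = Φ(z) - exp(α²/2 - αz) Φ₂((αρ - c, z - α); -ρ)`. -/
theorem factor_model_marginal_cdf
    {Ω : Type*} [MeasurableSpace Ω] (P : Measure Ω) [IsProbabilityMeasure P]
    (Z Zs V : Ω → ℝ) (hZ : Measurable Z) (hZs : Measurable Zs) (hV : Measurable V)
    (ρ c α : ℝ) (hα : 0 < α) (hρ : ρ ∈ Set.Ioo (-1 : ℝ) 1)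
    (hZZs : ∀ a b : ℝ, (P {ω | Z ω < a ∧ Zs ω < b}).toReal = binormCDF ρ a b)
    (hVexp : ∀ v : ℝ, (P {ω | V ω ≤ v}).toReal =
      if 0 ≤ v then 1 - Real.exp (-v) else 0)
    (hindep : IndepFun (fun ω => (Z ω, Zs ω)) V P) :
    ∀ z : ℝ,
      (P {ω | Z ω + (1 / α) * V ω * (if c < Zs ω then 1 else 0) < z}).toReal =
        stdNormCDF z - Real.exp (α ^ 2 / 2 - α * z) * binormCDF (-ρ) (α * ρ - c) (z - α) := by
  intro z
  -- the exponential cdf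
  set F : ℝ → ℝ := fun t => if 0 ≤ t then 1 - Real.exp (-t) else 0 with hF
  have hFmax : ∀ t, F t = max (1 - Real.exp (-t)) 0 := by
    intro t
    by_cases h : 0 ≤ t
    · rw [hF]
      simp only [h, if_true]
      rw [max_eq_left]
      have : Real.exp (-t) ≤ 1 := Real.exp_le_one_iff.2 (by linarith)
      linarith
    · push_neg at h
      rw [hF]
      simp only [not_le.2 h, if_false]
      rw [max_eq_right]
      have : (1:ℝ) ≤ Real.exp (-t) := Real.one_le_exp (by linarith)
      linarith
  have hFnonneg : ∀ t, 0 ≤ F t := fun t => (hFmax t) ▸ le_max_right _ _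
  have hFcont : Continuous F := by
    rw [show F = fun t => max (1 - Real.exp (-t)) 0 from funext hFmax]
    exact (continuous_const.sub (Real.continuous_exp.comp continuous_neg)).max continuous_const
  -- measures
  have hm2 : Measurable fun ω => (Z ω, Zs ω) := hZ.prodMk hZs
  have hμ2 : Measure.map (fun ω => (Z ω, Zs ω)) P = binormMeasure ρ :=
    map_eq_binormMeasure P hZ hZs hρ hZZs
  set μV := Measure.map V P with hμV
  haveI : IsProbabilityMeasure μV := Measure.isProbabilityMeasure_map hV.aemeasurable
  have hVIic : ∀ t, μV (Iic t) = ENNReal.ofReal (F t) := by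
    intro t
    rw [hμV, Measure.map_apply hV measurableSet_Iic,
      show V ⁻¹' Iic t = {ω | V ω ≤ t} from rfl,
      ← ENNReal.ofReal_toReal (measure_ne_top P _), hVexp t]
  have hVIicR : ∀ t, (μV (Iic t)).toReal = F t := by
    intro t
    rw [hVIic t, ENNReal.toReal_ofReal (hFnonneg t)]
  have hVsingleton : ∀ t, μV {t} = 0 := by
    intro t
    have hb : ∀ ε : ℝ, 0 < ε → (μV {t}).toReal ≤ F t - F (t - ε) := by
      intro ε hε
      have hsub : Iic (t - ε) ∪ Ioc (t - ε) t = Iic t := Iic_union_Ioc_eq_Iic (by linarith)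
      have hadd : μV (Iic (t - ε)) + μV (Ioc (t - ε) t) = μV (Iic t) := by
        rw [← measure_union (Iic_disjoint_Ioc le_rfl) measurableSet_Ioc, hsub]
      have h1 : μV {t} ≤ μV (Ioc (t - ε) t) := by
        refine measure_mono ?_
        intro x hx
        simp only [mem_singleton_iff] at hx
        subst hx
        exact ⟨by linarith, le_rfl⟩
      have h2 : (μV {t}).toReal ≤ (μV (Ioc (t - ε) t)).toReal :=
        ENNReal.toReal_mono (measure_ne_top _ _) h1
      have h3 := congrArg ENNReal.toReal hadd
      rw [ENNReal.toReal_add (measure_ne_top _ _) (measure_ne_top _ _), hVIicR, hVIicR] at h3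
      linarith
    have htend : Filter.Tendsto (fun ε : ℝ => F t - F (t - ε))
        (nhdsWithin 0 (Ioi 0)) (nhds 0) := by
      have hc : Filter.Tendsto (fun ε : ℝ => F t - F (t - ε)) (nhds 0) (nhds (F t - F (t - 0))) :=
        tendsto_const_nhds.sub ((hFcont.tendsto _).comp
          (tendsto_const_nhds.sub Filter.tendsto_id))
      rw [sub_zero, sub_self] at hc
      exact hc.mono_left nhdsWithin_le_nhds
    have hle : (μV {t}).toReal ≤ 0 :=
      ge_of_tendsto htend (eventually_nhdsWithin_of_forall fun ε hε => hb ε hε)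
    have h0 : (μV {t}).toReal = 0 := le_antisymm hle ENNReal.toReal_nonneg
    rcases (ENNReal.toReal_eq_zero_iff _).mp h0 with h | h
    · exact h
    · exact absurd h (measure_ne_top _ _)
  have hVIio : ∀ t, μV (Iio t) = ENNReal.ofReal (F t) := by
    intro t
    rw [← Set.Iic_diff_right, measure_diff_null (hVsingleton t), hVIic t]
  -- the event as a preimage
  set S : Set ((ℝ × ℝ) × ℝ) :=
    {q | q.1.1 + (1 / α) * q.2 * (if c < q.1.2 then (1:ℝ) else 0) < z} with hSdef
  have hgmeas : Measurable fun q : (ℝ × ℝ) × ℝ =>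
      q.1.1 + (1 / α) * q.2 * (if c < q.1.2 then (1:ℝ) else 0) := by
    have hind : Measurable fun q : (ℝ × ℝ) × ℝ => (if c < q.1.2 then (1:ℝ) else 0) :=
      Measurable.ite (measurableSet_lt measurable_const (measurable_fst.snd))
        measurable_const measurable_const
    exact (measurable_fst.fst).add ((measurable_const.mul measurable_snd).mul hind)
  have hS : MeasurableSet S := hgmeas measurableSet_Iio
  have hWmeas : Measurable fun ω => ((Z ω, Zs ω), V ω) := hm2.prodMk hV
  have hprod := (indepFun_iff_map_prod_eq_prod_map_map hm2.aemeasurable hV.aemeasurable).mp hindep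
  have hevent : {ω | Z ω + (1 / α) * V ω * (if c < Zs ω then 1 else 0) < z}
      = (fun ω => ((Z ω, Zs ω), V ω)) ⁻¹' S := rfl
  -- slice computation
  have hslice : ∀ p : ℝ × ℝ, μV (Prod.mk p ⁻¹' S) = ENNReal.ofReal
      ((if p.1 < z then (1:ℝ) else 0)
        * (if c < p.2 then 1 - Real.exp (-(α * (z - p.1))) else 1)) := by
    intro p
    by_cases hy : c < p.2
    · have hset : Prod.mk p ⁻¹' S = Iio (α * (z - p.1)) := by
        ext v
        simp only [hSdef, mem_preimage, mem_setOf_eq, mem_Iio, hy, if_true, mul_one]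
        rw [div_mul_eq_mul_div, one_mul]
        constructor <;> intro h
        · have : v / α < z - p.1 := by linarith
          calc v = (v / α) * α := by field_simp
          _ < (z - p.1) * α := by exact mul_lt_mul_of_pos_right this hα
          _ = α * (z - p.1) := by ring
        · have : v / α < z - p.1 := by
            rw [div_lt_iff₀ hα]
            calc v < α * (z - p.1) := h
            _ = (z - p.1) * α := by ring
          linarith
      rw [hset, hVIio]
      by_cases hx : p.1 < z
      · have hpos : (0:ℝ) ≤ α * (z - p.1) := by nlinarith
        rw [hF]
        simp only [hpos, if_true, hx, hy, if_true, one_mul]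
      · push_neg at hx
        have hnp : α * (z - p.1) ≤ 0 := by nlinarith
        rw [hFmax]
        have : max (1 - Real.exp (-(α * (z - p.1)))) 0 = 0 := by
          rw [max_eq_right]
          have : (1:ℝ) ≤ Real.exp (-(α * (z - p.1))) := Real.one_le_exp (by linarith)
          linarith
        rw [this]
        simp only [not_lt.2 hx, if_false, hy, if_true, zero_mul, ENNReal.ofReal_zero]
    · have hset : Prod.mk p ⁻¹' S = {v : ℝ | p.1 < z} := by
        ext v
        simp only [hSdef, mem_preimage, mem_setOf_eq, hy, if_false, mul_zero, add_zero]
      rw [hset]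
      by_cases hx : p.1 < z
      · have : {v : ℝ | p.1 < z} = (univ : Set ℝ) := by
          ext v; simp [hx]
        rw [this, measure_univ]
        simp only [hx, if_true, hy, if_false, mul_one, ENNReal.ofReal_one]
      · have : {v : ℝ | p.1 < z} = (∅ : Set ℝ) := by
          ext v; simp [hx]
        rw [this, measure_empty]
        simp only [hx, if_false, hy, zero_mul, ENNReal.ofReal_zero]
  -- G properties
  set G : ℝ × ℝ → ℝ := fun p => (if p.1 < z then (1:ℝ) else 0)
      * (if c < p.2 then 1 - Real.exp (-(α * (z - p.1))) else 1) with hG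
  have hGmeas : Measurable G := by
    refine Measurable.mul ?_ ?_
    · exact Measurable.ite (measurableSet_lt measurable_fst measurable_const)
        measurable_const measurable_const
    · exact Measurable.ite (measurableSet_lt measurable_const measurable_snd)
        (by fun_prop) measurable_const
  have hGbound : ∀ p, 0 ≤ G p ∧ G p ≤ 1 := by
    intro p
    rw [hG]
    by_cases hx : p.1 < z <;> by_cases hy : c < p.2 <;>
      simp only [hx, hy, if_true, if_false, one_mul, zero_mul, mul_one]
    · have h1 : Real.exp (-(α * (z - p.1))) ≤ 1 := Real.exp_le_one_iff.2 (by nlinarith)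
      have h2 : (0:ℝ) < Real.exp (-(α * (z - p.1))) := Real.exp_pos _
      constructor <;> linarith
    · norm_num
    · norm_num
    · norm_num
  have hGfint : Integrable (fun p => G p * binormPDF ρ p) volume := by
    refine Integrable.bdd_mul (binormPDF_integrable hρ) hGmeas.aestronglyMeasurable (c := 1) (ae_of_all _ fun p => ?_)
    rw [Real.norm_eq_abs, abs_of_nonneg (hGbound p).1]
    exact (hGbound p).2
  have hGfnonneg : ∀ p, 0 ≤ G p * binormPDF ρ p :=
    fun p => mul_nonneg (hGbound p).1 (binormPDF_nonneg hρ p)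
  -- main computation
  have key : P {ω | Z ω + (1 / α) * V ω * (if c < Zs ω then 1 else 0) < z}
      = ENNReal.ofReal (∫ p : ℝ × ℝ, G p * binormPDF ρ p) := by
    rw [hevent, ← Measure.map_apply hWmeas hS, hprod, hμ2, Measure.prod_apply hS]
    rw [lintegral_congr hslice]
    rw [binormMeasure, lintegral_withDensity_eq_lintegral_mul _
      ((binormPDF_continuous hρ).measurable.ennreal_ofReal) hGmeas.ennreal_ofReal]
    have hpt : (fun p => (ENNReal.ofReal (binormPDF ρ p) * ENNReal.ofReal (G p)))
        = fun p => ENNReal.ofReal (G p * binormPDF ρ p) := by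
      funext p
      rw [← ENNReal.ofReal_mul (binormPDF_nonneg hρ p), mul_comm]
    rw [show ((fun p => ENNReal.ofReal (binormPDF ρ p)) * fun p => ENNReal.ofReal (G p))
        = fun p => ENNReal.ofReal (G p * binormPDF ρ p) from hpt]
    rw [← ofReal_integral_eq_lintegral_ofReal hGfint (ae_of_all _ hGfnonneg)]
  rw [key, ENNReal.toReal_ofReal
    (integral_nonneg hGfnonneg)]
  exact integral_G_mul hρ hα c z
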